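/- Let 0 < a* < τ* satisfy the first-order condition 2ρ(a*) + (a* + k/σ)ρ'(a*) = 0, where ρ'(a*) = ∫_ℝ (1/(exp(2a*y)+1))² (y − a*) φ(y−a*) dy. Define w*(y) := 1/(1+exp(2a*y)) and 𝐰(y) := w*(y)² − (w*'(y))² − w*''(y)·w*(y) + w*(y)·w*'(y)·(k/σ + y), where w*' and w*'' denote the first and second derivatives of w*. Then the function 𝐠(θ) := 2∫_ℝ 𝐰(y) φ(y−θ) dy has a unique sign change from positive to negative at a* on [−k/σ, ∞): 𝐠(θ) > 0 for −k/σ ≤ θ < a*, 𝐠(a*) = 0, and 𝐠(θ) < 0 for θ > a*. -/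

import Mathlib

open Real MeasureTheory

/-- The standard normal density. -/
noncomputable def gaussPdf (x : ℝ) : ℝ :=
  (Real.sqrt (2 * Real.pi))⁻¹ * Real.exp (-(x ^ 2) / 2)

/-- ρ(a) = ∫ (1/(exp(2ay)+1))² φ(y−a) dy. -/
noncomputable def ρ (a : ℝ) : ℝ :=
  ∫ y : ℝ, (1 / (Real.exp (2 * a * y) + 1)) ^ 2 * gaussPdf (y - a)

namespace S16

open Filter


lemma gaussPdf_pos (x : ℝ) : 0 < gaussPdf x := by
  unfold gaussPdf
  positivity

lemma continuous_gaussPdf : Continuous gaussPdf := by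
  unfold gaussPdf; fun_prop

lemma hasDerivAt_gaussPdf (x : ℝ) : HasDerivAt gaussPdf (-x * gaussPdf x) x := by
  unfold gaussPdf
  have h1 : HasDerivAt (fun x : ℝ => -(x ^ 2) / 2) (-x) x := by
    have := ((hasDerivAt_pow 2 x).neg).div_const 2
    exact this.congr_deriv (by push_cast; ring)
  have h2 := (Real.hasDerivAt_exp (-(x^2)/2)).comp x h1
  have := h2.const_mul (Real.sqrt (2 * Real.pi))⁻¹
  exact this.congr_deriv (by ring)

lemma integrable_gaussPdf : Integrable gaussPdf := by
  have : Integrable (fun x : ℝ => Real.exp (-(1/2 : ℝ) * x ^ 2)) := integrable_exp_neg_mul_sq (by norm_num)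
  have h2 : (fun x : ℝ => gaussPdf x) = fun x => (Real.sqrt (2 * Real.pi))⁻¹ * Real.exp (-(1/2 : ℝ) * x ^ 2) := by
    funext x; unfold gaussPdf; ring_nf
  rw [show gaussPdf = fun x : ℝ => gaussPdf x from rfl, h2]
  exact this.const_mul _

lemma integrable_abs_mul_gaussPdf : Integrable (fun x : ℝ => |x| * gaussPdf x) := by
  have : Integrable (fun x : ℝ => x * Real.exp (-(1/2 : ℝ) * x ^ 2)) := integrable_mul_exp_neg_mul_sq (by norm_num)
  have h := this.abs
  have h2 : (fun x : ℝ => |x * Real.exp (-(1/2 : ℝ) * x ^ 2)|) = fun x => |x| * Real.exp (-(1/2:ℝ) * x ^ 2) := by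
    funext x
    rw [abs_mul, abs_of_pos (Real.exp_pos _)]
  rw [h2] at h
  have h3 : (fun x : ℝ => |x| * gaussPdf x) = fun x => (Real.sqrt (2 * Real.pi))⁻¹ * (|x| * Real.exp (-(1/2:ℝ) * x ^ 2)) := by
    funext x; unfold gaussPdf; ring_nf
  rw [h3]
  exact h.const_mul _

lemma tendsto_gaussPdf_atTop : Tendsto gaussPdf atTop (nhds 0) := by
  have h1 : Tendsto (fun x : ℝ => -(x^2)/2) atTop atBot := by
    apply Tendsto.atBot_div_const (by norm_num)
    exact Filter.tendsto_neg_atTop_atBot.comp (tendsto_pow_atTop (by norm_num))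
  have := (Real.tendsto_exp_atBot).comp h1
  have h2 := this.const_mul (Real.sqrt (2 * Real.pi))⁻¹
  rw [mul_zero] at h2
  apply h2.congr
  intro x
  simp [gaussPdf, Function.comp]

lemma tendsto_gaussPdf_atBot : Tendsto gaussPdf atBot (nhds 0) := by
  have h := tendsto_gaussPdf_atTop.comp tendsto_neg_atBot_atTop
  apply h.congr
  intro x
  simp only [Function.comp_apply]
  unfold gaussPdf
  rw [neg_pow]
  norm_num

noncomputable def Wfn (a y : ℝ) : ℝ := 1 / (1 + Real.exp (2 * a * y))
noncomputable def W1f (a y : ℝ) : ℝ :=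
  -(2*a) * Real.exp (2*a*y) / (1 + Real.exp (2*a*y))^2
noncomputable def W2f (a y : ℝ) : ℝ :=
  -(4*a^2) * Real.exp (2*a*y) * (1 - Real.exp (2*a*y)) / (1 + Real.exp (2*a*y))^3
noncomputable def sfn (a y : ℝ) : ℝ := Real.exp (2*a*y) / (1 + Real.exp (2*a*y))

noncomputable def Fn (a θ : ℝ) : ℝ := ∫ y : ℝ, (Wfn a y)^2 * gaussPdf (y - θ)
noncomputable def Sn (a θ : ℝ) : ℝ := ∫ y : ℝ, sfn a y * (Wfn a y)^2 * gaussPdf (y - θ)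

variable (a : ℝ)

lemma onep_pos (y : ℝ) : 0 < 1 + Real.exp (2*a*y) := by positivity

lemma hasDerivAt_lin (y : ℝ) : HasDerivAt (fun y : ℝ => 2*a*y) (2*a) y := by
  simpa using (hasDerivAt_id y).const_mul (2*a)

lemma hasDerivAt_E (y : ℝ) :
    HasDerivAt (fun y : ℝ => Real.exp (2*a*y)) (2*a*Real.exp (2*a*y)) y := by
  have := (Real.hasDerivAt_exp (2*a*y)).comp y (hasDerivAt_lin a y)
  exact this.congr_deriv (by ring)

lemma hasDerivAt_Wfn (y : ℝ) : HasDerivAt (Wfn a) (W1f a y) y := by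
  have h1 : HasDerivAt (fun y : ℝ => 1 + Real.exp (2*a*y)) (2*a*Real.exp (2*a*y)) y :=
    (hasDerivAt_E a y).const_add 1
  have h2 := h1.inv (ne_of_gt (onep_pos a y))
  have h3 : (fun y : ℝ => (1 + Real.exp (2*a*y))⁻¹) = Wfn a := by
    funext y; rw [Wfn, one_div]
  rw [← h3]
  exact h2.congr_deriv (by rw [W1f]; ring)

lemma hasDerivAt_W1f (y : ℝ) : HasDerivAt (W1f a) (W2f a y) y := by
  have hnum : HasDerivAt (fun y : ℝ => -(2*a) * Real.exp (2*a*y))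
      (-(2*a) * (2*a*Real.exp (2*a*y))) y := (hasDerivAt_E a y).const_mul _
  have hden : HasDerivAt (fun y : ℝ => (1 + Real.exp (2*a*y))^2)
      (2 * (1 + Real.exp (2*a*y)) * (2*a*Real.exp (2*a*y))) y := by
    have h1 : HasDerivAt (fun y : ℝ => 1 + Real.exp (2*a*y)) (2*a*Real.exp (2*a*y)) y :=
      (hasDerivAt_E a y).const_add 1
    have := (hasDerivAt_pow 2 (1 + Real.exp (2*a*y))).comp y h1
    exact this.congr_deriv (by ring)
  have h := hnum.div hden (by positivity)
  have h3 : (fun y : ℝ => -(2*a) * Real.exp (2*a*y) / (1 + Real.exp (2*a*y))^2) = W1f a := rfl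
  rw [← h3]
  refine h.congr_deriv ?_
  rw [W2f]
  have hp : (0:ℝ) < 1 + Real.exp (2*a*y) := onep_pos a y
  field_simp
  ring

lemma Wfn_pos (y : ℝ) : 0 < Wfn a y := by rw [Wfn]; positivity
lemma Wfn_le_one (y : ℝ) : Wfn a y ≤ 1 := by
  rw [Wfn]
  rw [div_le_one (onep_pos a y)]
  nlinarith [Real.exp_pos (2*a*y)]
lemma sfn_pos (y : ℝ) : 0 < sfn a y := by rw [sfn]; positivity
lemma sfn_le_one (y : ℝ) : sfn a y ≤ 1 := by
  rw [sfn, div_le_one (onep_pos a y)]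
  linarith
lemma abs_Wfn_le (y : ℝ) : |Wfn a y| ≤ 1 := by
  rw [abs_of_pos (Wfn_pos a y)]; exact Wfn_le_one a y
lemma abs_W1f_le (y : ℝ) : |W1f a y| ≤ 2 * |a| := by
  have he := Real.exp_pos (2*a*y)
  have hd := onep_pos a y
  rw [W1f, abs_div, abs_of_pos (by positivity : (0:ℝ) < (1 + Real.exp (2*a*y))^2),
    div_le_iff₀ (by positivity)]
  have h1 : |(-(2*a) * Real.exp (2*a*y))| = 2 * |a| * Real.exp (2*a*y) := by
    rw [abs_mul, abs_neg, abs_mul, abs_of_pos he, abs_of_nonneg (by norm_num : (0:ℝ) ≤ 2)]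
  rw [h1]
  have h2 : Real.exp (2*a*y) ≤ (1 + Real.exp (2*a*y))^2 := by nlinarith
  exact mul_le_mul_of_nonneg_left h2 (by positivity)

lemma abs_W2f_le (y : ℝ) : |W2f a y| ≤ 4 * a^2 := by
  have he := Real.exp_pos (2*a*y)
  have hd := onep_pos a y
  rw [W2f, abs_div, abs_of_pos (by positivity : (0:ℝ) < (1 + Real.exp (2*a*y))^3),
    div_le_iff₀ (by positivity), abs_mul, abs_mul,
    show |(-(4*a^2))| = 4*a^2 by rw [abs_neg, abs_of_nonneg (by positivity)],
    abs_of_pos he]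
  have h4 : |1 - Real.exp (2*a*y)| ≤ 1 + Real.exp (2*a*y) := by
    rw [abs_le]; constructor <;> nlinarith
  have key : Real.exp (2*a*y) * |1 - Real.exp (2*a*y)|
      ≤ (1 + Real.exp (2*a*y))^3 := by
    calc Real.exp (2*a*y) * |1 - Real.exp (2*a*y)|
        ≤ Real.exp (2*a*y) * (1 + Real.exp (2*a*y)) := by
          exact mul_le_mul_of_nonneg_left h4 he.le
      _ = (1 + Real.exp (2*a*y)) * Real.exp (2*a*y) := by ring
      _ ≤ (1 + Real.exp (2*a*y)) * (1 + Real.exp (2*a*y))^2 :=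
          mul_le_mul_of_nonneg_left (by nlinarith) hd.le
      _ = (1 + Real.exp (2*a*y))^3 := by ring
  calc 4*a^2 * Real.exp (2*a*y) * |1 - Real.exp (2*a*y)|
      = 4*a^2 * (Real.exp (2*a*y) * |1 - Real.exp (2*a*y)|) := by ring
    _ ≤ 4*a^2 * (1 + Real.exp (2*a*y))^3 := by
        exact mul_le_mul_of_nonneg_left key (by positivity)

lemma continuous_Wfn : Continuous (Wfn a) := by
  apply Continuous.div continuous_const (by fun_prop)
  intro y; exact ne_of_gt (onep_pos a y)
lemma continuous_W1f : Continuous (W1f a) := by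
  apply Continuous.div (by fun_prop) (by fun_prop)
  intro y; positivity
lemma continuous_W2f : Continuous (W2f a) := by
  apply Continuous.div (by fun_prop) (by fun_prop)
  intro y; positivity
lemma continuous_sfn : Continuous (sfn a) := by
  apply Continuous.div (by fun_prop) (by fun_prop)
  intro y; exact ne_of_gt (onep_pos a y)

lemma sfn_mono {a : ℝ} (ha : 0 < a) {y z : ℝ} (hyz : y ≤ z) : sfn a y ≤ sfn a z := by
  rw [sfn, sfn, div_le_div_iff₀ (onep_pos a y) (onep_pos a z)]
  have h : Real.exp (2*a*y) ≤ Real.exp (2*a*z) := by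
    apply Real.exp_le_exp.2
    nlinarith
  nlinarith [Real.exp_pos (2*a*y), Real.exp_pos (2*a*z)]

/-- master integrability lemma -/
lemma integrable_mul_gauss {g : ℝ → ℝ} (θ : ℝ) (hg : Continuous g) (C : ℝ)
    (hb : ∀ y, |g y| ≤ C * (1 + |y - θ|)) :
    Integrable (fun y => g y * gaussPdf (y - θ)) := by
  have hint : Integrable (fun y : ℝ => C * ((1 + |y - θ|) * gaussPdf (y - θ))) := by
    have h1 : Integrable (fun x : ℝ => (1 + |x|) * gaussPdf x) := by
      have h := integrable_gaussPdf.add integrable_abs_mul_gaussPdf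
      apply h.congr
      filter_upwards with x
      simp only [Pi.add_apply]
      ring
    have h2 : Integrable (fun y : ℝ => (1 + |y - θ|) * gaussPdf (y - θ)) := by
      have e : MeasurePreserving (fun y : ℝ => y - θ) volume volume :=
        measurePreserving_sub_right volume θ
      exact (e.integrable_comp_emb (Homeomorph.subRight θ).measurableEmbedding).mpr h1
    exact h2.const_mul C
  apply Integrable.mono' hint
  · exact (hg.mul (continuous_gaussPdf.comp (by fun_prop))).aestronglyMeasurable
  · filter_upwards with y
    rw [norm_mul]
    have h2 : ‖gaussPdf (y - θ)‖ = gaussPdf (y - θ) := by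
      rw [Real.norm_eq_abs, abs_of_pos (gaussPdf_pos _)]
    rw [h2, Real.norm_eq_abs]
    calc |g y| * gaussPdf (y - θ) ≤ (C * (1 + |y - θ|)) * gaussPdf (y - θ) :=
          mul_le_mul_of_nonneg_right (hb y) (gaussPdf_pos _).le
      _ = C * ((1 + |y - θ|) * gaussPdf (y - θ)) := by ring

lemma tendsto_gauss_shift_top (θ : ℝ) :
    Tendsto (fun y : ℝ => gaussPdf (y - θ)) atTop (nhds 0) := by
  have h := tendsto_gaussPdf_atTop.comp (tendsto_atTop_add_const_right atTop (-θ) tendsto_id)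
  apply h.congr
  intro x
  simp [Function.comp, sub_eq_add_neg]

lemma tendsto_gauss_shift_bot (θ : ℝ) :
    Tendsto (fun y : ℝ => gaussPdf (y - θ)) atBot (nhds 0) := by
  have h := tendsto_gaussPdf_atBot.comp (tendsto_atBot_add_const_right atBot (-θ) tendsto_id)
  apply h.congr
  intro x
  simp [Function.comp, sub_eq_add_neg]

/-- Generic integration by parts against the Gaussian: for a bounded C¹ function u with
bounded derivative, `∫ (u' - u·(y-θ)) φ(y-θ) = 0`. -/
lemma integral_ibp_zero {u u' : ℝ → ℝ} (hu : ∀ y, HasDerivAt u (u' y) y)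
    (hcu : Continuous u) (hcu' : Continuous u') (Cu Cu' : ℝ)
    (hbu : ∀ y, |u y| ≤ Cu) (hbu' : ∀ y, |u' y| ≤ Cu') (θ : ℝ) :
    ∫ y : ℝ, (u' y - u y * (y - θ)) * gaussPdf (y - θ) = 0 := by
  have hCu : 0 ≤ Cu := le_trans (abs_nonneg _) (hbu 0)
  have hCu' : 0 ≤ Cu' := le_trans (abs_nonneg _) (hbu' 0)
  have hderiv : ∀ y : ℝ, HasDerivAt (fun y => u y * gaussPdf (y - θ))
      ((u' y - u y * (y - θ)) * gaussPdf (y - θ)) y := by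
    intro y
    have hG : HasDerivAt (fun y : ℝ => gaussPdf (y - θ)) (-(y - θ) * gaussPdf (y - θ)) y := by
      have := (hasDerivAt_gaussPdf (y - θ)).comp y ((hasDerivAt_id y).sub_const θ)
      simpa [Function.comp_def] using this
    have := (hu y).mul hG
    exact this.congr_deriv (by ring)
  have hint : Integrable (fun y : ℝ => (u' y - u y * (y - θ)) * gaussPdf (y - θ)) := by
    apply integrable_mul_gauss θ (by fun_prop) (Cu + Cu')
    intro y
    calc |u' y - u y * (y - θ)| ≤ |u' y| + |u y * (y - θ)| := abs_sub _ _
      _ = |u' y| + |u y| * |y - θ| := by rw [abs_mul]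
      _ ≤ Cu' + Cu * |y - θ| := by
          have := mul_le_mul_of_nonneg_right (hbu y) (abs_nonneg (y - θ))
          linarith [hbu' y]
      _ ≤ (Cu + Cu') * (1 + |y - θ|) := by nlinarith [abs_nonneg (y - θ)]
  have hbnd : ∀ y : ℝ, |u y * gaussPdf (y - θ)| ≤ Cu * gaussPdf (y - θ) := by
    intro y
    rw [abs_mul, abs_of_pos (gaussPdf_pos _)]
    exact mul_le_mul_of_nonneg_right (hbu y) (gaussPdf_pos _).le
  have htop : Tendsto (fun y : ℝ => u y * gaussPdf (y - θ)) atTop (nhds 0) := by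
    rw [tendsto_zero_iff_abs_tendsto_zero]
    apply squeeze_zero (fun y => abs_nonneg _) hbnd
    have := (tendsto_gauss_shift_top θ).const_mul Cu
    simpa using this
  have hbot : Tendsto (fun y : ℝ => u y * gaussPdf (y - θ)) atBot (nhds 0) := by
    rw [tendsto_zero_iff_abs_tendsto_zero]
    apply squeeze_zero (fun y => abs_nonneg _) hbnd
    have := (tendsto_gauss_shift_bot θ).const_mul Cu
    simpa using this
  have := integral_of_hasDerivAt_of_tendsto hderiv hint hbot htop
  simpa using this

-- continuation inside namespace S16, `variable (a : ℝ)` in scope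

lemma hasDerivAt_Wsq (y : ℝ) :
    HasDerivAt (fun y => Wfn a y ^ 2) (2 * Wfn a y * W1f a y) y := by
  have := (hasDerivAt_Wfn a y).mul (hasDerivAt_Wfn a y)
  have h2 : (fun y => Wfn a y * Wfn a y) = fun y => Wfn a y ^ 2 := by
    funext y; ring
  rw [← h2]
  exact this.congr_deriv (by ring)

lemma hasDerivAt_WW1 (y : ℝ) :
    HasDerivAt (fun y => Wfn a y * W1f a y) (W1f a y ^ 2 + W2f a y * Wfn a y) y := by
  have := (hasDerivAt_Wfn a y).mul (hasDerivAt_W1f a y)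
  exact this.congr_deriv (by ring)

lemma I1 (θ : ℝ) :
    ∫ y : ℝ, (2 * Wfn a y * W1f a y - Wfn a y ^ 2 * (y - θ)) * gaussPdf (y - θ) = 0 := by
  apply integral_ibp_zero (hasDerivAt_Wsq a) (by
      have := continuous_Wfn a; fun_prop)
    (by have h1 := continuous_Wfn a; have h2 := continuous_W1f a; fun_prop)
    1 (4 * |a|) _ _ θ
  · intro y
    rw [abs_pow]
    exact pow_le_one₀ (abs_nonneg _) (abs_Wfn_le a y)
  · intro y
    calc |2 * Wfn a y * W1f a y| = 2 * |Wfn a y| * |W1f a y| := by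
          rw [abs_mul, abs_mul]; norm_num
      _ ≤ 2 * 1 * (2 * |a|) := by
          apply mul_le_mul _ (abs_W1f_le a y) (abs_nonneg _) (by norm_num)
          have := abs_Wfn_le a y
          nlinarith [abs_nonneg (Wfn a y)]
      _ = 4 * |a| := by ring

lemma I2 (θ : ℝ) :
    ∫ y : ℝ, ((W1f a y ^ 2 + W2f a y * Wfn a y) - Wfn a y * W1f a y * (y - θ)) *
      gaussPdf (y - θ) = 0 := by
  apply integral_ibp_zero (hasDerivAt_WW1 a)
    (by have h1 := continuous_Wfn a; have h2 := continuous_W1f a; fun_prop)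
    (by have h1 := continuous_Wfn a; have h2 := continuous_W1f a;
        have h3 := continuous_W2f a; fun_prop)
    (2 * |a|) (8 * a ^ 2) _ _ θ
  · intro y
    calc |Wfn a y * W1f a y| = |Wfn a y| * |W1f a y| := abs_mul _ _
      _ ≤ 1 * (2 * |a|) := mul_le_mul (abs_Wfn_le a y) (abs_W1f_le a y) (abs_nonneg _) zero_le_one
      _ = 2 * |a| := by ring
  · intro y
    calc |W1f a y ^ 2 + W2f a y * Wfn a y| ≤ |W1f a y ^ 2| + |W2f a y * Wfn a y| := abs_add_le _ _
      _ = |W1f a y| ^ 2 + |W2f a y| * |Wfn a y| := by rw [abs_mul, abs_pow]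
      _ ≤ (2 * |a|) ^ 2 + (4 * a ^ 2) * 1 := by
          apply add_le_add
          · exact pow_le_pow_left₀ (abs_nonneg _) (abs_W1f_le a y) 2
          · exact mul_le_mul (abs_W2f_le a y) (abs_Wfn_le a y) (abs_nonneg _) (by positivity)
      _ = 8 * a ^ 2 := by rw [mul_pow]; rw [sq_abs]; ring

lemma WW1_eq (y : ℝ) : Wfn a y * W1f a y = -(2*a) * (sfn a y * Wfn a y ^ 2) := by
  have hp : (0:ℝ) < 1 + Real.exp (2*a*y) := onep_pos a y
  rw [Wfn, W1f, sfn]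
  field_simp

lemma integrable_Wsq_gauss (θ : ℝ) :
    Integrable (fun y : ℝ => Wfn a y ^ 2 * gaussPdf (y - θ)) := by
  apply integrable_mul_gauss θ (by have := continuous_Wfn a; fun_prop) 1
  intro y
  rw [abs_pow]
  calc |Wfn a y| ^ 2 ≤ 1 := pow_le_one₀ (abs_nonneg _) (abs_Wfn_le a y)
    _ ≤ 1 * (1 + |y - θ|) := by nlinarith [abs_nonneg (y - θ)]

lemma integrable_sWsq_gauss (θ : ℝ) :
    Integrable (fun y : ℝ => sfn a y * Wfn a y ^ 2 * gaussPdf (y - θ)) := by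
  apply integrable_mul_gauss θ
    (by have h1 := continuous_Wfn a; have h2 := continuous_sfn a; fun_prop) 1
  intro y
  rw [abs_mul, abs_pow]
  calc |sfn a y| * |Wfn a y| ^ 2 ≤ 1 * 1 := by
        apply mul_le_mul _ (pow_le_one₀ (abs_nonneg _) (abs_Wfn_le a y)) (by positivity) zero_le_one
        rw [abs_of_pos (sfn_pos a y)]; exact sfn_le_one a y
    _ ≤ 1 * (1 + |y - θ|) := by nlinarith [abs_nonneg (y - θ)]

lemma Fn_pos (θ : ℝ) : 0 < Fn a θ := by
  rw [Fn]
  rw [integral_pos_iff_support_of_nonneg]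
  · have : Function.support (fun y : ℝ => Wfn a y ^ 2 * gaussPdf (y - θ)) = Set.univ := by
      apply Set.eq_univ_of_forall
      intro y
      rw [Function.mem_support]
      exact ne_of_gt (mul_pos (pow_pos (Wfn_pos a y) 2) (gaussPdf_pos (y - θ)))
    rw [this]
    simp [Real.volume_univ]
  · intro y
    exact (mul_pos (pow_pos (Wfn_pos a y) 2) (gaussPdf_pos (y - θ))).le
  · exact integrable_Wsq_gauss a θ

lemma Sn_pos (θ : ℝ) : 0 < Sn a θ := by
  rw [Sn]
  rw [integral_pos_iff_support_of_nonneg]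
  · have : Function.support (fun y : ℝ => sfn a y * Wfn a y ^ 2 * gaussPdf (y - θ)) = Set.univ := by
      apply Set.eq_univ_of_forall
      intro y
      rw [Function.mem_support]
      exact ne_of_gt (mul_pos (mul_pos (sfn_pos a y) (pow_pos (Wfn_pos a y) 2)) (gaussPdf_pos (y - θ)))
    rw [this]
    simp [Real.volume_univ]
  · intro y
    exact (mul_pos (mul_pos (sfn_pos a y) (pow_pos (Wfn_pos a y) 2)) (gaussPdf_pos (y - θ))).le
  · exact integrable_sWsq_gauss a θ

lemma integrable_WW1_gauss (θ : ℝ) :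
    Integrable (fun y : ℝ => Wfn a y * W1f a y * gaussPdf (y - θ)) := by
  apply integrable_mul_gauss θ
    (by have h1 := continuous_Wfn a; have h2 := continuous_W1f a; fun_prop) (2 * |a| + 1)
  intro y
  have h1 : |Wfn a y * W1f a y| ≤ 2 * |a| := by
    calc |Wfn a y * W1f a y| = |Wfn a y| * |W1f a y| := abs_mul _ _
      _ ≤ 1 * (2 * |a|) := mul_le_mul (abs_Wfn_le a y) (abs_W1f_le a y) (abs_nonneg _) zero_le_one
      _ = 2 * |a| := by ring
  nlinarith [abs_nonneg (y - θ), abs_nonneg a]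

lemma integrable_Wsq_lin_gauss (θ : ℝ) :
    Integrable (fun y : ℝ => Wfn a y ^ 2 * ((y - θ) * gaussPdf (y - θ))) := by
  have h : Integrable (fun y : ℝ => (Wfn a y ^ 2 * (y - θ)) * gaussPdf (y - θ)) := by
    apply integrable_mul_gauss θ (by have := continuous_Wfn a; fun_prop) 1
    intro y
    rw [abs_mul, abs_pow]
    calc |Wfn a y| ^ 2 * |y - θ| ≤ 1 * |y - θ| := by
          apply mul_le_mul_of_nonneg_right _ (abs_nonneg _)
          exact pow_le_one₀ (abs_nonneg _) (abs_Wfn_le a y)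
      _ ≤ 1 * (1 + |y - θ|) := by nlinarith [abs_nonneg (y - θ)]
  apply h.congr
  filter_upwards with y
  ring

lemma integrable_I2core (θ : ℝ) :
    Integrable (fun y : ℝ => ((W1f a y ^ 2 + W2f a y * Wfn a y) -
      Wfn a y * W1f a y * (y - θ)) * gaussPdf (y - θ)) := by
  apply integrable_mul_gauss θ
    (by have h1 := continuous_Wfn a; have h2 := continuous_W1f a;
        have h3 := continuous_W2f a; fun_prop) (8 * a ^ 2 + 2 * |a|)
  intro y
  have hWW1 : |Wfn a y * W1f a y| ≤ 2 * |a| := by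
    calc |Wfn a y * W1f a y| = |Wfn a y| * |W1f a y| := abs_mul _ _
      _ ≤ 1 * (2 * |a|) := mul_le_mul (abs_Wfn_le a y) (abs_W1f_le a y) (abs_nonneg _) zero_le_one
      _ = 2 * |a| := by ring
  have hsum : |W1f a y ^ 2 + W2f a y * Wfn a y| ≤ 8 * a ^ 2 := by
    calc |W1f a y ^ 2 + W2f a y * Wfn a y| ≤ |W1f a y ^ 2| + |W2f a y * Wfn a y| := abs_add_le _ _
      _ = |W1f a y| ^ 2 + |W2f a y| * |Wfn a y| := by rw [abs_mul, abs_pow]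
      _ ≤ (2 * |a|) ^ 2 + (4 * a ^ 2) * 1 := by
          apply add_le_add
          · exact pow_le_pow_left₀ (abs_nonneg _) (abs_W1f_le a y) 2
          · exact mul_le_mul (abs_W2f_le a y) (abs_Wfn_le a y) (abs_nonneg _) (by positivity)
      _ = 8 * a ^ 2 := by rw [mul_pow]; rw [sq_abs]; ring
  calc |W1f a y ^ 2 + W2f a y * Wfn a y - Wfn a y * W1f a y * (y - θ)|
      ≤ |W1f a y ^ 2 + W2f a y * Wfn a y| + |Wfn a y * W1f a y * (y - θ)| := abs_sub _ _
    _ = |W1f a y ^ 2 + W2f a y * Wfn a y| + |Wfn a y * W1f a y| * |y - θ| := by rw [abs_mul]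
    _ ≤ 8 * a ^ 2 + (2 * |a|) * |y - θ| := by
        apply add_le_add hsum
        exact mul_le_mul_of_nonneg_right hWW1 (abs_nonneg _)
    _ ≤ (8 * a ^ 2 + 2 * |a|) * (1 + |y - θ|) := by
        nlinarith [abs_nonneg (y - θ), abs_nonneg a, sq_nonneg a]

lemma G_eq (θ : ℝ) :
    ∫ y : ℝ, Wfn a y * W1f a y * gaussPdf (y - θ) = -(2*a) * Sn a θ := by
  have h : (fun y : ℝ => Wfn a y * W1f a y * gaussPdf (y - θ)) =
      fun y : ℝ => (-(2*a)) * (sfn a y * Wfn a y ^ 2 * gaussPdf (y - θ)) := by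
    funext y
    rw [WW1_eq]
    ring
  rw [h, integral_const_mul]
  rfl

lemma I1' (θ : ℝ) :
    ∫ y : ℝ, Wfn a y ^ 2 * ((y - θ) * gaussPdf (y - θ)) = -(4*a) * Sn a θ := by
  have h0 := I1 a θ
  have hsub : (fun y : ℝ => (2 * Wfn a y * W1f a y - Wfn a y ^ 2 * (y - θ)) * gaussPdf (y - θ)) =
      fun y : ℝ => (2 : ℝ) * (Wfn a y * W1f a y * gaussPdf (y - θ)) -
        Wfn a y ^ 2 * ((y - θ) * gaussPdf (y - θ)) := by
    funext y; ring
  rw [hsub, integral_sub ((integrable_WW1_gauss a θ).const_mul 2)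
    (integrable_Wsq_lin_gauss a θ), integral_const_mul, G_eq] at h0
  linarith

lemma bw_int (θ c : ℝ) :
    ∫ y : ℝ, (Wfn a y ^ 2 - W1f a y ^ 2 - W2f a y * Wfn a y +
        Wfn a y * W1f a y * (c + y)) * gaussPdf (y - θ) =
      Fn a θ - 2*a*(θ + c) * Sn a θ := by
  have iB : Integrable (fun y : ℝ => (-1 : ℝ) * (((W1f a y ^ 2 + W2f a y * Wfn a y) -
      Wfn a y * W1f a y * (y - θ)) * gaussPdf (y - θ))) :=
    (integrable_I2core a θ).const_mul (-1)
  have iC : Integrable (fun y : ℝ => (θ + c) * (Wfn a y * W1f a y * gaussPdf (y - θ))) :=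
    (integrable_WW1_gauss a θ).const_mul (θ + c)
  have iBC : Integrable (fun y : ℝ => (-1 : ℝ) * (((W1f a y ^ 2 + W2f a y * Wfn a y) -
      Wfn a y * W1f a y * (y - θ)) * gaussPdf (y - θ)) +
      (θ + c) * (Wfn a y * W1f a y * gaussPdf (y - θ))) := iB.add iC
  have hE : (fun y : ℝ => (Wfn a y ^ 2 - W1f a y ^ 2 - W2f a y * Wfn a y +
        Wfn a y * W1f a y * (c + y)) * gaussPdf (y - θ)) =
      fun y : ℝ => Wfn a y ^ 2 * gaussPdf (y - θ) +
        ((-1 : ℝ) * (((W1f a y ^ 2 + W2f a y * Wfn a y) -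
            Wfn a y * W1f a y * (y - θ)) * gaussPdf (y - θ)) +
          (θ + c) * (Wfn a y * W1f a y * gaussPdf (y - θ))) := by
    funext y; ring
  rw [hE, integral_add (integrable_Wsq_gauss a θ) iBC, integral_add iB iC,
    integral_const_mul, integral_const_mul, I2, G_eq]
  have : (∫ y : ℝ, Wfn a y ^ 2 * gaussPdf (y - θ)) = Fn a θ := rfl
  rw [this]
  ring

lemma gauss_swap {θ₁ θ₂ y z : ℝ} (h12 : θ₁ ≤ θ₂) (hyz : y ≤ z) :
    gaussPdf (y - θ₂) * gaussPdf (z - θ₁) ≤ gaussPdf (y - θ₁) * gaussPdf (z - θ₂) := by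
  unfold gaussPdf
  rw [show ((Real.sqrt (2 * Real.pi))⁻¹ * Real.exp (-((y - θ₂) ^ 2) / 2)) *
      ((Real.sqrt (2 * Real.pi))⁻¹ * Real.exp (-((z - θ₁) ^ 2) / 2)) =
      ((Real.sqrt (2 * Real.pi))⁻¹ * (Real.sqrt (2 * Real.pi))⁻¹) *
      (Real.exp (-((y - θ₂) ^ 2) / 2) * Real.exp (-((z - θ₁) ^ 2) / 2)) from by ring,
    show ((Real.sqrt (2 * Real.pi))⁻¹ * Real.exp (-((y - θ₁) ^ 2) / 2)) *
      ((Real.sqrt (2 * Real.pi))⁻¹ * Real.exp (-((z - θ₂) ^ 2) / 2)) =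
      ((Real.sqrt (2 * Real.pi))⁻¹ * (Real.sqrt (2 * Real.pi))⁻¹) *
      (Real.exp (-((y - θ₁) ^ 2) / 2) * Real.exp (-((z - θ₂) ^ 2) / 2)) from by ring,
    ← Real.exp_add, ← Real.exp_add]
  apply mul_le_mul_of_nonneg_left _ (by positivity)
  apply Real.exp_le_exp.2
  nlinarith [mul_nonneg (sub_nonneg.2 h12) (sub_nonneg.2 hyz)]

lemma corr {a : ℝ} (ha : 0 < a) {θ₁ θ₂ : ℝ} (h12 : θ₁ ≤ θ₂) :
    Sn a θ₁ * Fn a θ₂ ≤ Sn a θ₂ * Fn a θ₁ := by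
  -- the symmetrized double integrand is pointwise nonnegative
  have hpt : ∀ y z : ℝ, 0 ≤ (sfn a y - sfn a z) *
      ((Wfn a y ^ 2 * Wfn a z ^ 2) *
        (gaussPdf (y - θ₂) * gaussPdf (z - θ₁) - gaussPdf (y - θ₁) * gaussPdf (z - θ₂))) := by
    intro y z
    rcases le_total y z with hyz | hyz
    · rw [← neg_mul_neg]
      apply mul_nonneg
      · simpa using sub_nonpos.2 (sfn_mono ha hyz)
      · rw [neg_nonneg]
        apply mul_nonpos_of_nonneg_of_nonpos (by positivity)
        exact sub_nonpos.2 (gauss_swap h12 hyz)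
    · apply mul_nonneg
      · simpa using sub_nonneg.2 (sfn_mono ha hyz)
      · apply mul_nonneg (by positivity)
        have := gauss_swap h12 hyz
        nlinarith [this]
  have key : 0 ≤ ∫ y : ℝ, ∫ z : ℝ, (sfn a y - sfn a z) *
      ((Wfn a y ^ 2 * Wfn a z ^ 2) *
        (gaussPdf (y - θ₂) * gaussPdf (z - θ₁) - gaussPdf (y - θ₁) * gaussPdf (z - θ₂))) := by
    apply integral_nonneg
    intro y
    exact integral_nonneg (fun z => hpt y z)
  -- compute the double integral
  have hinner : ∀ y : ℝ, (∫ z : ℝ, (sfn a y - sfn a z) *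
      ((Wfn a y ^ 2 * Wfn a z ^ 2) *
        (gaussPdf (y - θ₂) * gaussPdf (z - θ₁) - gaussPdf (y - θ₁) * gaussPdf (z - θ₂)))) =
      (sfn a y * Wfn a y ^ 2 * gaussPdf (y - θ₂)) * Fn a θ₁ +
      ((sfn a y * Wfn a y ^ 2 * gaussPdf (y - θ₁)) * (-(Fn a θ₂)) +
      ((Wfn a y ^ 2 * gaussPdf (y - θ₂)) * (-(Sn a θ₁)) +
      (Wfn a y ^ 2 * gaussPdf (y - θ₁)) * (Sn a θ₂))) := by
    intro y
    have i1 : Integrable (fun z : ℝ => (sfn a y * Wfn a y ^ 2 * gaussPdf (y - θ₂)) *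
        (Wfn a z ^ 2 * gaussPdf (z - θ₁))) := (integrable_Wsq_gauss a θ₁).const_mul _
    have i2 : Integrable (fun z : ℝ => (-(sfn a y * Wfn a y ^ 2 * gaussPdf (y - θ₁))) *
        (Wfn a z ^ 2 * gaussPdf (z - θ₂))) := (integrable_Wsq_gauss a θ₂).const_mul _
    have i3 : Integrable (fun z : ℝ => (-(Wfn a y ^ 2 * gaussPdf (y - θ₂))) *
        (sfn a z * Wfn a z ^ 2 * gaussPdf (z - θ₁))) := (integrable_sWsq_gauss a θ₁).const_mul _
    have i4 : Integrable (fun z : ℝ => (Wfn a y ^ 2 * gaussPdf (y - θ₁)) *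
        (sfn a z * Wfn a z ^ 2 * gaussPdf (z - θ₂))) := (integrable_sWsq_gauss a θ₂).const_mul _
    have i34 : Integrable (fun z : ℝ => (-(Wfn a y ^ 2 * gaussPdf (y - θ₂))) *
        (sfn a z * Wfn a z ^ 2 * gaussPdf (z - θ₁)) +
        (Wfn a y ^ 2 * gaussPdf (y - θ₁)) * (sfn a z * Wfn a z ^ 2 * gaussPdf (z - θ₂))) :=
      i3.add i4
    have i234 : Integrable (fun z : ℝ => (-(sfn a y * Wfn a y ^ 2 * gaussPdf (y - θ₁))) *
        (Wfn a z ^ 2 * gaussPdf (z - θ₂)) +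
        ((-(Wfn a y ^ 2 * gaussPdf (y - θ₂))) * (sfn a z * Wfn a z ^ 2 * gaussPdf (z - θ₁)) +
        (Wfn a y ^ 2 * gaussPdf (y - θ₁)) * (sfn a z * Wfn a z ^ 2 * gaussPdf (z - θ₂)))) :=
      i2.add i34
    have hE : (fun z : ℝ => (sfn a y - sfn a z) *
        ((Wfn a y ^ 2 * Wfn a z ^ 2) *
          (gaussPdf (y - θ₂) * gaussPdf (z - θ₁) - gaussPdf (y - θ₁) * gaussPdf (z - θ₂)))) =
        fun z : ℝ => (sfn a y * Wfn a y ^ 2 * gaussPdf (y - θ₂)) *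
          (Wfn a z ^ 2 * gaussPdf (z - θ₁)) +
          ((-(sfn a y * Wfn a y ^ 2 * gaussPdf (y - θ₁))) * (Wfn a z ^ 2 * gaussPdf (z - θ₂)) +
          ((-(Wfn a y ^ 2 * gaussPdf (y - θ₂))) * (sfn a z * Wfn a z ^ 2 * gaussPdf (z - θ₁)) +
          (Wfn a y ^ 2 * gaussPdf (y - θ₁)) * (sfn a z * Wfn a z ^ 2 * gaussPdf (z - θ₂)))) := by
      funext z; ring
    rw [hE, integral_add i1 i234, integral_add i2 i34, integral_add i3 i4,
      integral_const_mul, integral_const_mul, integral_const_mul, integral_const_mul]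
    have e1 : (∫ z : ℝ, Wfn a z ^ 2 * gaussPdf (z - θ₁)) = Fn a θ₁ := rfl
    have e2 : (∫ z : ℝ, Wfn a z ^ 2 * gaussPdf (z - θ₂)) = Fn a θ₂ := rfl
    have e3 : (∫ z : ℝ, sfn a z * Wfn a z ^ 2 * gaussPdf (z - θ₁)) = Sn a θ₁ := rfl
    have e4 : (∫ z : ℝ, sfn a z * Wfn a z ^ 2 * gaussPdf (z - θ₂)) = Sn a θ₂ := rfl
    rw [e1, e2, e3, e4]
    ring
  rw [show (fun y : ℝ => ∫ z : ℝ, (sfn a y - sfn a z) *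
      ((Wfn a y ^ 2 * Wfn a z ^ 2) *
        (gaussPdf (y - θ₂) * gaussPdf (z - θ₁) - gaussPdf (y - θ₁) * gaussPdf (z - θ₂)))) =
      fun y : ℝ => (sfn a y * Wfn a y ^ 2 * gaussPdf (y - θ₂)) * Fn a θ₁ +
      ((sfn a y * Wfn a y ^ 2 * gaussPdf (y - θ₁)) * (-(Fn a θ₂)) +
      ((Wfn a y ^ 2 * gaussPdf (y - θ₂)) * (-(Sn a θ₁)) +
      (Wfn a y ^ 2 * gaussPdf (y - θ₁)) * (Sn a θ₂))) from funext hinner] at key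
  have j1 : Integrable (fun y : ℝ => (sfn a y * Wfn a y ^ 2 * gaussPdf (y - θ₂)) * Fn a θ₁) :=
    (integrable_sWsq_gauss a θ₂).mul_const _
  have j2 : Integrable (fun y : ℝ => (sfn a y * Wfn a y ^ 2 * gaussPdf (y - θ₁)) * (-(Fn a θ₂))) :=
    (integrable_sWsq_gauss a θ₁).mul_const _
  have j3 : Integrable (fun y : ℝ => (Wfn a y ^ 2 * gaussPdf (y - θ₂)) * (-(Sn a θ₁))) :=
    (integrable_Wsq_gauss a θ₂).mul_const _
  have j4 : Integrable (fun y : ℝ => (Wfn a y ^ 2 * gaussPdf (y - θ₁)) * (Sn a θ₂)) :=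
    (integrable_Wsq_gauss a θ₁).mul_const _
  have j34 : Integrable (fun y : ℝ => (Wfn a y ^ 2 * gaussPdf (y - θ₂)) * (-(Sn a θ₁)) +
      (Wfn a y ^ 2 * gaussPdf (y - θ₁)) * (Sn a θ₂)) := j3.add j4
  have j234 : Integrable (fun y : ℝ => (sfn a y * Wfn a y ^ 2 * gaussPdf (y - θ₁)) * (-(Fn a θ₂)) +
      ((Wfn a y ^ 2 * gaussPdf (y - θ₂)) * (-(Sn a θ₁)) +
      (Wfn a y ^ 2 * gaussPdf (y - θ₁)) * (Sn a θ₂))) := j2.add j34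
  rw [integral_add j1 j234, integral_add j2 j34, integral_add j3 j4,
    integral_mul_const, integral_mul_const, integral_mul_const, integral_mul_const] at key
  have e1 : (∫ y : ℝ, Wfn a y ^ 2 * gaussPdf (y - θ₁)) = Fn a θ₁ := rfl
  have e2 : (∫ y : ℝ, Wfn a y ^ 2 * gaussPdf (y - θ₂)) = Fn a θ₂ := rfl
  have e3 : (∫ y : ℝ, sfn a y * Wfn a y ^ 2 * gaussPdf (y - θ₁)) = Sn a θ₁ := rfl
  have e4 : (∫ y : ℝ, sfn a y * Wfn a y ^ 2 * gaussPdf (y - θ₂)) = Sn a θ₂ := rfl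
  rw [e1, e2, e3, e4] at key
  nlinarith [key]

end S16

/-- Under the first-order condition for a* ∈ (0, τ*), the function
𝐠(θ) = 2∫ 𝐰(y)φ(y−θ) dy, where 𝐰 is built from w*(y) = 1/(1+exp(2a*y)) and its first
and second derivatives, has a unique sign change from positive to negative at a* on
[−k/σ, ∞). -/



theorem stmt_16 (σ k τstar astar : ℝ) (hσ : 0 < σ) (hk : 0 < k)
    (hτ0 : 0 ≤ τstar)
    (hτmax : ∀ τ : ℝ, 0 ≤ τ → τ ^ 2 * ρ τ ≤ τstar ^ 2 * ρ τstar)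
    (ha0 : 0 < astar) (haτ : astar < τstar)
    (hFOC : 2 * ρ astar + (astar + k / σ) *
      (∫ y : ℝ, (1 / (Real.exp (2 * astar * y) + 1)) ^ 2 *
        ((y - astar) * gaussPdf (y - astar))) = 0)
    (wstar : ℝ → ℝ) (hw : ∀ y, wstar y = 1 / (1 + Real.exp (2 * astar * y)))
    (bw : ℝ → ℝ)
    (hbw : ∀ y, bw y = (wstar y) ^ 2 - (deriv wstar y) ^ 2 -
      deriv (deriv wstar) y * wstar y + wstar y * deriv wstar y * (k / σ + y))
    (bg : ℝ → ℝ)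
    (hbg : ∀ θ, bg θ = 2 * ∫ y : ℝ, bw y * gaussPdf (y - θ)) :
    (∀ θ : ℝ, -(k / σ) ≤ θ → θ < astar → 0 < bg θ) ∧
    bg astar = 0 ∧
    (∀ θ : ℝ, astar < θ → bg θ < 0) := by
  have hwW : wstar = S16.Wfn astar := funext fun y => by rw [hw y, S16.Wfn]
  subst hwW
  have hc : 0 < k / σ := div_pos hk hσ
  have hd1 : deriv (S16.Wfn astar) = S16.W1f astar :=
    funext fun y => (S16.hasDerivAt_Wfn astar y).deriv
  have hd2 : deriv (deriv (S16.Wfn astar)) = S16.W2f astar := by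
    rw [hd1]
    exact funext fun y => (S16.hasDerivAt_W1f astar y).deriv
  have hbw' : ∀ y, bw y = S16.Wfn astar y ^ 2 - S16.W1f astar y ^ 2 -
      S16.W2f astar y * S16.Wfn astar y +
      S16.Wfn astar y * S16.W1f astar y * (k / σ + y) := by
    intro y
    rw [hbw y, hd2, hd1]
  have bgval : ∀ θ, bg θ =
      2 * (S16.Fn astar θ - 2 * astar * (θ + k / σ) * S16.Sn astar θ) := by
    intro θ
    rw [hbg θ]
    have h : (fun y : ℝ => bw y * gaussPdf (y - θ)) =
        fun y : ℝ => (S16.Wfn astar y ^ 2 - S16.W1f astar y ^ 2 -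
          S16.W2f astar y * S16.Wfn astar y +
          S16.Wfn astar y * S16.W1f astar y * (k / σ + y)) * gaussPdf (y - θ) :=
      funext fun y => by rw [hbw' y]
    rw [h, S16.bw_int astar θ (k / σ)]
  have hρ : ρ astar = S16.Fn astar astar := by
    rw [ρ, S16.Fn]
    congr 1
    funext y
    rw [S16.Wfn, add_comm (Real.exp (2 * astar * y)) 1]
  have hI : (∫ y : ℝ, (1 / (Real.exp (2 * astar * y) + 1)) ^ 2 *
      ((y - astar) * gaussPdf (y - astar))) = -(4 * astar) * S16.Sn astar astar := by
    rw [← S16.I1' astar astar]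
    congr 1
    funext y
    rw [S16.Wfn, add_comm (Real.exp (2 * astar * y)) 1]
  rw [hρ, hI] at hFOC
  have hFa : S16.Fn astar astar =
      2 * astar * (astar + k / σ) * S16.Sn astar astar := by linarith
  have hFapos := S16.Fn_pos astar astar
  have hSapos := S16.Sn_pos astar astar
  refine ⟨?_, ?_, ?_⟩
  · intro θ hθ1 hθ2
    rw [bgval θ]
    have hFθ := S16.Fn_pos astar θ
    have hSθ := S16.Sn_pos astar θ
    have hθc : 0 ≤ θ + k / σ := by linarith
    have hcorr := S16.corr ha0 (le_of_lt hθ2)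
    have h1 : 2 * astar * (θ + k / σ) * (S16.Sn astar θ * S16.Fn astar astar) ≤
        2 * astar * (θ + k / σ) * (S16.Sn astar astar * S16.Fn astar θ) :=
      mul_le_mul_of_nonneg_left hcorr (by positivity)
    have h2 : 2 * astar * (θ + k / σ) * (S16.Sn astar astar * S16.Fn astar θ) <
        2 * astar * (astar + k / σ) * (S16.Sn astar astar * S16.Fn astar θ) := by
      apply mul_lt_mul_of_pos_right _ (mul_pos hSapos hFθ)
      nlinarith
    have h4 : (2 * astar * (θ + k / σ) * S16.Sn astar θ) * S16.Fn astar astar <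
        S16.Fn astar θ * S16.Fn astar astar := by nlinarith [h1, h2, hFa]
    have h5 := lt_of_mul_lt_mul_right h4 hFapos.le
    linarith
  · rw [bgval astar, hFa]
    ring
  · intro θ hθ
    rw [bgval θ]
    have hFθ := S16.Fn_pos astar θ
    have hSθ := S16.Sn_pos astar θ
    have hθc : 0 < θ + k / σ := by linarith
    have hcorr := S16.corr ha0 (le_of_lt hθ)
    have h1 : 2 * astar * (astar + k / σ) * (S16.Sn astar astar * S16.Fn astar θ) ≤
        2 * astar * (astar + k / σ) * (S16.Sn astar θ * S16.Fn astar astar) :=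
      mul_le_mul_of_nonneg_left hcorr (by positivity)
    have h2 : 2 * astar * (astar + k / σ) * (S16.Sn astar θ * S16.Fn astar astar) <
        2 * astar * (θ + k / σ) * (S16.Sn astar θ * S16.Fn astar astar) := by
      apply mul_lt_mul_of_pos_right _ (mul_pos hSθ hFapos)
      nlinarith
    have h4 : S16.Fn astar θ * S16.Fn astar astar <
        (2 * astar * (θ + k / σ) * S16.Sn astar θ) * S16.Fn astar astar := by
      nlinarith [h1, h2, hFa]
    have h5 := lt_of_mul_lt_mul_right h4 hFapos.le
    linarith
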